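/- Under the same null-model hypotheses, the average over all permutations σ of AUCC(σ) = s₊(σ)/(s₊(σ) + s₋(σ)) equals 1/2, where s₊(σ) + s₋(σ) = S is constant and positive. -/

import Mathlib

noncomputable def sPlus {X : Type*} [Fintype X] [DecidableEq X] {k : ℕ}
    (d : X → X → ℝ) (C : X → Fin k) (σ : Equiv.Perm X) : ℕ :=
  (Finset.univ.filter (fun q : (X × X) × (X × X) =>
    q.1.1 ≠ q.1.2 ∧ C (σ q.1.1) = C (σ q.1.2) ∧ C (σ q.2.1) ≠ C (σ q.2.2) ∧
    d q.1.1 q.1.2 < d q.2.1 q.2.2)).card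

noncomputable def sMinus {X : Type*} [Fintype X] [DecidableEq X] {k : ℕ}
    (d : X → X → ℝ) (C : X → Fin k) (σ : Equiv.Perm X) : ℕ :=
  (Finset.univ.filter (fun q : (X × X) × (X × X) =>
    q.1.1 ≠ q.1.2 ∧ C (σ q.1.1) = C (σ q.1.2) ∧ C (σ q.2.1) ≠ C (σ q.2.2) ∧
    d q.1.1 q.1.2 > d q.2.1 q.2.2)).card

/-- The number of permutations making a fixed pair of points lie in a common
cluster does not depend on the pair (as long as the points are distinct). -/
lemma cnt_eq {X : Type*} [Fintype X] [DecidableEq X] {k : ℕ} (C : X → Fin k)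
    {a b c e : X} (hab : a ≠ b) (hce : c ≠ e) :
    (Finset.univ.filter fun σ : Equiv.Perm X => C (σ a) = C (σ b)).card
      = (Finset.univ.filter fun σ : Equiv.Perm X => C (σ c) = C (σ e)).card := by
  classical
  set e₁ := Equiv.swap a c e with he1
  have he1a : e₁ ≠ a := by
    intro h
    have : e = c := (Equiv.swap a c).injective (by simpa [Equiv.swap_apply_right] using h)
    exact hce this.symm
  set π : Equiv.Perm X := Equiv.swap b e₁ * Equiv.swap a c with hπ
  have hπc : π c = a := by
    simp only [hπ, Equiv.Perm.mul_apply, Equiv.swap_apply_right]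
    exact Equiv.swap_apply_of_ne_of_ne hab he1a.symm
  have hπe : π e = b := by
    simp [hπ, Equiv.Perm.mul_apply, ← he1, Equiv.swap_apply_right]
  apply Finset.card_bij' (fun σ _ => σ * π) (fun σ _ => σ * π⁻¹)
  · intro σ hσ
    simp only [Finset.mem_filter, Finset.mem_univ, true_and] at hσ ⊢
    simpa [Equiv.Perm.mul_apply, hπc, hπe] using hσ
  · intro σ hσ
    simp only [Finset.mem_filter, Finset.mem_univ, true_and] at hσ ⊢
    have h2 : π⁻¹ a = c := by rw [← hπc]; simp
    have h3 : π⁻¹ b = e := by rw [← hπe]; simp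
    simpa [Equiv.Perm.mul_apply, h2, h3] using hσ
  · intro σ _; simp [mul_assoc]
  · intro σ _; simp [mul_assoc]

/-- For each quadruple, the number of permutations putting it in the
"concordant" configuration equals the number putting the swapped quadruple in
the "discordant" configuration. -/
lemma key {X : Type*} [Fintype X] [DecidableEq X] {k : ℕ}
    (d : X → X → ℝ) (C : X → Fin k) (a b c e : X) :
    (Finset.univ.filter fun σ : Equiv.Perm X =>
        a ≠ b ∧ C (σ a) = C (σ b) ∧ C (σ c) ≠ C (σ e) ∧ d a b < d c e).card
      = (Finset.univ.filter fun σ : Equiv.Perm X =>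
        c ≠ e ∧ C (σ c) = C (σ e) ∧ C (σ a) ≠ C (σ b) ∧ d c e > d a b).card := by
  classical
  by_cases hd : d a b < d c e
  swap
  · rw [Finset.filter_false_of_mem, Finset.filter_false_of_mem] <;> simp_all
  by_cases hab : a = b
  · subst hab
    rw [Finset.filter_false_of_mem, Finset.filter_false_of_mem] <;> simp_all
  by_cases hce : c = e
  · subst hce
    rw [Finset.filter_false_of_mem, Finset.filter_false_of_mem] <;> simp_all
  have h1 : (Finset.univ.filter fun σ : Equiv.Perm X =>
      a ≠ b ∧ C (σ a) = C (σ b) ∧ C (σ c) ≠ C (σ e) ∧ d a b < d c e).card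
      = (Finset.univ.filter fun σ : Equiv.Perm X =>
        C (σ a) = C (σ b) ∧ ¬ (C (σ c) = C (σ e))).card := by
    congr 1; apply Finset.filter_congr; intro σ _; simp [hab, hd]
  have h2 : (Finset.univ.filter fun σ : Equiv.Perm X =>
      c ≠ e ∧ C (σ c) = C (σ e) ∧ C (σ a) ≠ C (σ b) ∧ d c e > d a b).card
      = (Finset.univ.filter fun σ : Equiv.Perm X =>
        C (σ c) = C (σ e) ∧ ¬ (C (σ a) = C (σ b))).card := by
    congr 1; apply Finset.filter_congr; intro σ _; simp [hce, hd]
  rw [h1, h2]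
  have e1 := Finset.card_filter_add_card_filter_not
    (s := Finset.univ.filter fun σ : Equiv.Perm X => C (σ a) = C (σ b))
    (p := fun σ : Equiv.Perm X => C (σ c) = C (σ e))
  have e2 := Finset.card_filter_add_card_filter_not
    (s := Finset.univ.filter fun σ : Equiv.Perm X => C (σ c) = C (σ e))
    (p := fun σ : Equiv.Perm X => C (σ a) = C (σ b))
  rw [Finset.filter_filter, Finset.filter_filter] at e1 e2
  have e3 : (Finset.univ.filter fun σ : Equiv.Perm X =>
      C (σ a) = C (σ b) ∧ C (σ c) = C (σ e)).card
      = (Finset.univ.filter fun σ : Equiv.Perm X =>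
      C (σ c) = C (σ e) ∧ C (σ a) = C (σ b)).card := by
    congr 1; apply Finset.filter_congr; intro σ _
    constructor <;> (intro h; exact h.symm)
  have e4 := cnt_eq C hab hce
  omega

lemma sum_sPlus_eq_sum_sMinus {X : Type*} [Fintype X] [DecidableEq X] {k : ℕ}
    (d : X → X → ℝ) (C : X → Fin k) :
    (∑ σ : Equiv.Perm X, sPlus d C σ) = ∑ σ : Equiv.Perm X, sMinus d C σ := by
  classical
  simp only [sPlus, sMinus, Finset.card_filter]
  rw [Finset.sum_comm, Finset.sum_comm
    (s := (Finset.univ : Finset (Equiv.Perm X)))]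
  rw [← Equiv.sum_comp (Equiv.prodComm (X × X) (X × X))
    (fun q : (X × X) × (X × X) => ∑ σ : Equiv.Perm X,
      if q.1.1 ≠ q.1.2 ∧ C (σ q.1.1) = C (σ q.1.2) ∧ C (σ q.2.1) ≠ C (σ q.2.2) ∧
        d q.1.1 q.1.2 > d q.2.1 q.2.2 then 1 else 0)]
  apply Finset.sum_congr rfl
  intro q _
  simp only [Equiv.prodComm_apply, Prod.fst_swap, Prod.snd_swap]
  rw [← Finset.card_filter, key d C q.1.1 q.1.2 q.2.1 q.2.2, Finset.card_filter]
  exact Finset.sum_congr rfl (fun σ _ => by congr 1)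

theorem expected_aucc_half {X : Type*} [Fintype X] [DecidableEq X]
    {k : ℕ} (d : X → X → ℝ) (hsym : ∀ i j, d i j = d j i) (C : X → Fin k)
    (S : ℝ) (hSpos : 0 < S)
    (hS : ∀ σ : Equiv.Perm X, (sPlus d C σ : ℝ) + (sMinus d C σ : ℝ) = S) :
    (∑ σ : Equiv.Perm X,
        (sPlus d C σ : ℝ) / ((sPlus d C σ : ℝ) + (sMinus d C σ : ℝ))) /
      (Fintype.card (Equiv.Perm X) : ℝ) = 1 / 2 := by
  classical
  set N := Fintype.card (Equiv.Perm X) with hN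
  have hNpos : 0 < N := Fintype.card_pos
  have hcast : (∑ σ : Equiv.Perm X, (sPlus d C σ : ℝ))
      = ∑ σ : Equiv.Perm X, (sMinus d C σ : ℝ) := by
    have := sum_sPlus_eq_sum_sMinus d C
    push_cast [← Nat.cast_sum]
    exact_mod_cast this
  have h2 : 2 * ∑ σ : Equiv.Perm X, (sPlus d C σ : ℝ) = N * S := by
    have : ∑ σ : Equiv.Perm X, ((sPlus d C σ : ℝ) + (sMinus d C σ : ℝ))
        = N * S := by
      rw [Finset.sum_congr rfl (fun σ _ => hS σ)]
      simp [hN, mul_comm]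
    rw [two_mul]
    nth_rewrite 2 [hcast]
    rw [← Finset.sum_add_distrib]
    exact this
  have h3 : ∑ σ : Equiv.Perm X,
      (sPlus d C σ : ℝ) / ((sPlus d C σ : ℝ) + (sMinus d C σ : ℝ))
      = (∑ σ : Equiv.Perm X, (sPlus d C σ : ℝ)) / S := by
    rw [Finset.sum_div]
    exact Finset.sum_congr rfl (fun σ _ => by rw [hS σ])
  rw [h3]
  have hS0 : S ≠ 0 := ne_of_gt hSpos
  have hN0 : (N : ℝ) ≠ 0 := Nat.cast_ne_zero.mpr hNpos.ne'
  field_simp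
  linarith [h2]
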